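/- Suppose n, m, k ∈ ℕ satisfy 2^k + 1 ≤ n ≤ 2^{k+1} and m ≥ 2^k + 1 (Player 1 has the upper hand at level k). Then the value of ``Guess Who?'' is p(n,m) = 1 − 2^k/m + (2/3)·(2^{2k} + 2)/(n·m). -/

import Mathlib

set_option maxHeartbeats 1000000

lemma gw_exists_L (x : ℕ) (hx : 1 ≤ x) : ∃ L, x ≤ 2^L ∧ 2^L < 2*x := by
  refine ⟨Nat.clog 2 x, Nat.le_pow_clog one_lt_two x, ?_⟩
  rcases eq_or_lt_of_le hx with h|h
  · simp [← h]
  · have h1 : 2 ^ (Nat.clog 2 x - 1) < x := Nat.pow_pred_clog_lt_self one_lt_two h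
    have h2 : 1 ≤ Nat.clog 2 x := Nat.clog_pos one_lt_two h
    have h3 : 2 ^ Nat.clog 2 x = 2 * 2 ^ (Nat.clog 2 x - 1) := by
      rw [← pow_succ']; congr 1; omega
    omega

lemma gw_pow_le {a b : ℕ} (h : 2^a < 2^(b+1)) : 2^a ≤ 2^b := by
  have : a ≤ b := by
    by_contra hc
    have : 2^(b+1) ≤ 2^a := Nat.pow_le_pow_right (by norm_num) (by omega)
    omega
  exact Nat.pow_le_pow_right (by norm_num) this

lemma gw_exp_le {a b : ℕ} (h : 2^a ≤ 2^b) : a ≤ b := by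
  by_contra hc
  have h1 : 2^(b+1) ≤ 2^a := Nat.pow_le_pow_right (by norm_num) (by omega)
  have e : (2:ℕ)^(b+1) = 2*2^b := by ring
  have := Nat.two_pow_pos b
  omega

lemma gw_key (k L : ℕ) (x : ℚ) (hx1 : 1 ≤ x) (hxL : x ≤ 2^L)
    (hLx : (2:ℚ)^L < 2*x) (hLk : L ≤ k+1) :
    3*2^k*x + 2^L*2^L ≤ 3*2^L*x + 2^k*2^k := by
  rcases Nat.lt_or_ge L (k+1) with h | h
  · have hLk' : L ≤ k := by omega
    rcases Nat.eq_or_lt_of_le hLk' with he | hl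
    · subst he; linarith
    · have h3 : (2:ℚ)^(L+1) ≤ 2^k := by
        apply pow_le_pow_right₀ (by norm_num) hl
      rw [pow_succ] at h3
      nlinarith [pow_pos (show (0:ℚ)<2 by norm_num) L, pow_pos (show (0:ℚ)<2 by norm_num) k]
  · have hL : L = k+1 := by omega
    subst hL
    rw [pow_succ] at hLx ⊢
    nlinarith [pow_pos (show (0:ℚ)<2 by norm_num) k]

/-- The value of "Guess Who?" when Player 1 has the upper hand at level `k`:
if `p` is the value function of the game (characterized by its recurrence),
`2^k + 1 ≤ n ≤ 2^(k+1)` and `m ≥ 2^k + 1`, then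
`p n m = 1 − 2^k/m + (2/3)·(2^(2k)+2)/(n·m)`. -/
theorem guess_who_value_upper_hand
    (p : ℕ → ℕ → ℚ)
    (hp1 : ∀ m : ℕ, 2 ≤ m → p 1 m = 1)
    (hp2 : ∀ n : ℕ, 2 ≤ n → p n 1 = 0)
    (hrec : ∀ n m : ℕ, ∀ hn : 2 ≤ n, 2 ≤ m →
      p n m = (Finset.Icc 1 (n - 1)).sup' (Finset.nonempty_Icc.mpr (by omega))
        (fun b => 1 - (b : ℚ) / (n : ℚ) * p m b
          - ((n - b : ℕ) : ℚ) / (n : ℚ) * p m (n - b)))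
    (n m k : ℕ) (hn1 : 2 ^ k + 1 ≤ n) (hn2 : n ≤ 2 ^ (k + 1)) (hm : 2 ^ k + 1 ≤ m) :
    p n m = 1 - 2 ^ k / (m : ℚ) + 2 / 3 * (2 ^ (2 * k) + 2) / ((n : ℚ) * (m : ℚ)) := by
  have hpow2 : ∀ t : ℕ, (2:ℚ)^(2*t) = 2^t * 2^t := fun t => by rw [two_mul, pow_add]
  have hmain : ∀ N : ℕ, ∀ n m : ℕ, n + m ≤ N →
      ((∀ k : ℕ, 2^k+1 ≤ n → n ≤ 2^(k+1) → 2^k+1 ≤ m →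
          p n m = 1 - 2 ^ k / (m : ℚ) + 2 / 3 * (2 ^ (2 * k) + 2) / ((n : ℚ) * (m : ℚ))) ∧
       (∀ j : ℕ, 1 ≤ m → m ≤ 2^j → 2^j < 2*m → 2^j+1 ≤ n →
          p n m = 2^j/(n:ℚ) - (2^(2*j)+2)/(3*((n:ℚ)*(m:ℚ))))) := by
    intro N
    induction N with
    | zero =>
        intro n m h
        constructor
        · intro k h1 h2 h3
          have := Nat.two_pow_pos k; omega
        · intro j h1 h2 h3 h4
          have := Nat.two_pow_pos j; omega
    | succ N ih =>
      intro n m hnm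
      constructor
      · -- UPPER: 2^k+1 ≤ n ≤ 2^(k+1), m ≥ 2^k+1
        intro k hk1 hk2 hk3
        have hk0 := Nat.two_pow_pos k
        have hk0' := Nat.two_pow_pos (k+1)
        have epow : (2:ℕ)^(k+1) = 2*2^k := by ring
        have hn2' : 2 ≤ n := by omega
        have hm2' : 2 ≤ m := by omega
        have hnQ : (0:ℚ) < n := by exact_mod_cast Nat.lt_of_lt_of_le Nat.zero_lt_two hn2'
        have hmQ : (0:ℚ) < m := by exact_mod_cast Nat.lt_of_lt_of_le Nat.zero_lt_two hm2'
        have hmk : (2:ℚ)^k + 1 ≤ m := by exact_mod_cast hk3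
        -- both-lower bound
        have hboth : ∀ b c Lb Lc : ℕ, b + c = n → 1 ≤ b → 1 ≤ c →
            b ≤ 2^Lb → 2^Lb < 2*b → c ≤ 2^Lc → 2^Lc < 2*c → 2^Lb+1 ≤ m → 2^Lc+1 ≤ m →
            1 - (b:ℚ)/n * p m b - (c:ℚ)/n * p m c
              ≤ 1 - 2 ^ k / (m : ℚ) + 2 / 3 * (2 ^ (2 * k) + 2) / ((n : ℚ) * (m : ℚ)) := by
          intro b c Lb Lc hbc hb1 hc1 hbL hLb hcL hLc hmb hmc
          have hpb : p m b = 2^Lb/(m:ℚ) - (2^(2*Lb)+2)/(3*((m:ℚ)*(b:ℚ))) :=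
            (ih m b (by omega)).2 Lb hb1 hbL hLb hmb
          have hpc : p m c = 2^Lc/(m:ℚ) - (2^(2*Lc)+2)/(3*((m:ℚ)*(c:ℚ))) :=
            (ih m c (by omega)).2 Lc hc1 hcL hLc hmc
          have epow2 : (2:ℕ)^(k+2) = 4*2^k := by ring
          have hLbk : Lb ≤ k+1 := by
            by_contra hcon
            have h1 : 2^(k+2) ≤ 2^Lb := Nat.pow_le_pow_right (by norm_num) (by omega)
            omega
          have hLck : Lc ≤ k+1 := by
            by_contra hcon
            have h1 : 2^(k+2) ≤ 2^Lc := Nat.pow_le_pow_right (by norm_num) (by omega)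
            omega
          have keyb := gw_key k Lb (b:ℚ) (by exact_mod_cast hb1) (by exact_mod_cast hbL)
            (by exact_mod_cast hLb) hLbk
          have keyc := gw_key k Lc (c:ℚ) (by exact_mod_cast hc1) (by exact_mod_cast hcL)
            (by exact_mod_cast hLc) hLck
          have hbcQ : (b:ℚ) + (c:ℚ) = n := by exact_mod_cast hbc
          have hb0 : (0:ℚ) < b := by exact_mod_cast hb1
          have hc0 : (0:ℚ) < c := by exact_mod_cast hc1
          have hfb : 1 - (b:ℚ)/n * p m b - (c:ℚ)/n * p m c
              = 1 - (3*(2:ℚ)^Lb*b - 2^Lb*2^Lb + 3*2^Lc*c - 2^Lc*2^Lc - 4)/(3*((n:ℚ)*m)) := by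
            rw [hpb, hpc]; simp only [hpow2]; field_simp; ring
          have hR : 1 - 2 ^ k / (m : ℚ) + 2 / 3 * (2 ^ (2 * k) + 2) / ((n : ℚ) * (m : ℚ))
              = 1 - (3*(2:ℚ)^k*n - 2*(2^k*2^k) - 4)/(3*((n:ℚ)*m)) := by
            simp only [hpow2]; field_simp; ring
          rw [hfb, hR]
          have hD : (0:ℚ) < 3*((n:ℚ)*m) := by positivity
          refine sub_le_sub_left ((div_le_div_iff_of_pos_right hD).mpr ?_) 1
          rw [← hbcQ]
          linarith [keyb, keyc]
        -- mixed bound (b large, upper formula for b; m ≤ 2^(k+1))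
        have hmix : ∀ b c Lc : ℕ, b + c = n → 2^k+1 ≤ b → 1 ≤ c →
            c ≤ 2^Lc → 2^Lc < 2*c → m ≤ 2^(k+1) →
            1 - (b:ℚ)/n * p m b - (c:ℚ)/n * p m c
              ≤ 1 - 2 ^ k / (m : ℚ) + 2 / 3 * (2 ^ (2 * k) + 2) / ((n : ℚ) * (m : ℚ)) := by
          intro b c Lc hbc hbig hc1 hcL hLc hmle
          have hpb : p m b = 1 - 2^k/(b:ℚ) + 2/3*(2^(2*k)+2)/((m:ℚ)*(b:ℚ)) :=
            (ih m b (by omega)).1 k hk3 hmle hbig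
          have hLck2 : 2^Lc ≤ 2^k := gw_pow_le (by omega)
          have hLck : Lc ≤ k+1 := by have := gw_exp_le hLck2; omega
          have hpc : p m c = 2^Lc/(m:ℚ) - (2^(2*Lc)+2)/(3*((m:ℚ)*(c:ℚ))) :=
            (ih m c (by omega)).2 Lc hc1 hcL hLc (by omega)
          have keyc := gw_key k Lc (c:ℚ) (by exact_mod_cast hc1) (by exact_mod_cast hcL)
            (by exact_mod_cast hLc) hLck
          have hbcQ : (b:ℚ) + (c:ℚ) = n := by exact_mod_cast hbc
          have hb0 : (0:ℚ) < b := by exact_mod_cast (by omega : 0 < b)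
          have hc0 : (0:ℚ) < c := by exact_mod_cast hc1
          have hbQ : (2:ℚ)^k + 1 ≤ b := by exact_mod_cast hbig
          have hfb : 1 - (b:ℚ)/n * p m b - (c:ℚ)/n * p m c
              = 1 - (3*(b:ℚ)*m - 3*2^k*m + 2*(2^k*2^k) + 4 + 3*2^Lc*c - 2^Lc*2^Lc - 2)/(3*((n:ℚ)*m)) := by
            rw [hpb, hpc]; simp only [hpow2]; field_simp; ring
          have hR : 1 - 2 ^ k / (m : ℚ) + 2 / 3 * (2 ^ (2 * k) + 2) / ((n : ℚ) * (m : ℚ))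
              = 1 - (3*(2:ℚ)^k*n - 2*(2^k*2^k) - 4)/(3*((n:ℚ)*m)) := by
            simp only [hpow2]; field_simp; ring
          rw [hfb, hR]
          have hD : (0:ℚ) < 3*((n:ℚ)*m) := by positivity
          refine sub_le_sub_left ((div_le_div_iff_of_pos_right hD).mpr ?_) 1
          rw [← hbcQ]
          nlinarith [keyc, mul_nonneg (by linarith : (0:ℚ) ≤ (b:ℚ) - 2^k)
            (by linarith : (0:ℚ) ≤ (m:ℚ) - 2^k)]
        rw [hrec n m hn2' hm2']
        apply le_antisymm
        · apply Finset.sup'_le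
          intro b hb
          rw [Finset.mem_Icc] at hb
          have hb1 : 1 ≤ b := hb.1
          have hc1 : 1 ≤ n - b := by omega
          have hbc : b + (n - b) = n := by omega
          obtain ⟨Lb, hbL, hLb⟩ := gw_exists_L b hb1
          obtain ⟨Lc, hcL, hLc⟩ := gw_exists_L (n-b) hc1
          rcases Nat.lt_or_ge (2^k) b with hbig | hble
          · rcases le_or_gt m (2^(k+1)) with hmle | hmgt
            · exact hmix b (n-b) Lc hbc (by omega) hc1 hcL hLc hmle
            · refine hboth b (n-b) (k+1) Lc hbc hb1 hc1 (by omega) (by omega) hcL hLc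
                (by omega) ?_
              have hLck : 2^Lc ≤ 2^k := gw_pow_le (by omega)
              omega
          · have hLbk : 2^Lb ≤ 2^k := gw_pow_le (by omega)
            rcases le_or_gt (n - b) (2^k) with hcle | hcbig
            · have hLck : 2^Lc ≤ 2^k := gw_pow_le (by omega)
              exact hboth b (n-b) Lb Lc hbc hb1 hc1 hbL hLb hcL hLc (by omega) (by omega)
            · rcases le_or_gt m (2^(k+1)) with hmle | hmgt
              · have := hmix (n-b) b Lb (by omega) (by omega) hb1 hbL hLb hmle
                linarith
              · exact hboth b (n-b) Lb (k+1) hbc hb1 hc1 hbL hLb (by omega) (by omega)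
                  (by omega) (by omega)
        · -- existence of optimal b
          cases k with
          | zero =>
            have hneq : n = 2 := by norm_num at hk1 hk2; omega
            subst hneq
            have hmem : 1 ∈ Finset.Icc 1 (2-1) := by simp
            refine le_trans (le_of_eq ?_) (Finset.le_sup' _ hmem)
            norm_num [hp2 m hm2']
            field_simp
            ring
          | succ k' =>
            have hk'0 := Nat.two_pow_pos k'
            have e1 : (2:ℕ)^(k'+1) = 2*2^k' := by ring
            have e2 : (2:ℕ)^(k'+2) = 4*2^k' := by ring
            rcases le_or_gt n (2^(k'+1) + 2^k') with hsmall | hbig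
            · -- b₀ = n - 2^k', c₀ = 2^k'
              have hmem : n - 2^k' ∈ Finset.Icc 1 (n-1) := by rw [Finset.mem_Icc]; omega
              refine le_trans (le_of_eq ?_) (Finset.le_sup' _ hmem)
              have hc0 : n - (n - 2^k') = 2^k' := by omega
              have hpb : p m (n - 2^k') = 2^(k'+1)/(m:ℚ) - (2^(2*(k'+1))+2)/(3*((m:ℚ)*((n - 2^k' : ℕ):ℚ))) :=
                (ih m (n - 2^k') (by omega)).2 (k'+1) (by omega) (by omega) (by omega) (by omega)
              have hpc : p m (2^k') = 2^k'/(m:ℚ) - (2^(2*k')+2)/(3*((m:ℚ)*((2^k' : ℕ):ℚ))) :=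
                (ih m (2^k') (by omega)).2 k' (by omega) le_rfl (by omega) (by omega)
              rw [hc0, hpb, hpc]
              simp only [hpow2]
              have hle : (2:ℕ)^k' ≤ n := by omega
              push_cast [Nat.cast_sub hle]
              have hne1 : (n:ℚ) ≠ 0 := ne_of_gt hnQ
              have hne2 : (m:ℚ) ≠ 0 := ne_of_gt hmQ
              have hk'Q : ((2:ℚ)^k') < n := by
                have : (2:ℕ)^k' < n := by omega
                exact_mod_cast this
              have hne3 : (n:ℚ) - 2^k' ≠ 0 := by
                intro hcontra; rw [sub_eq_zero] at hcontra; exact absurd hcontra.symm (ne_of_lt hk'Q)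
              have hne4 : ((2:ℚ)^k') ≠ 0 := by positivity
              field_simp
              ring
            · -- b₀ = 2^(k'+1), c₀ = n - 2^(k'+1)
              have hmem : 2^(k'+1) ∈ Finset.Icc 1 (n-1) := by rw [Finset.mem_Icc]; omega
              refine le_trans (le_of_eq ?_) (Finset.le_sup' _ hmem)
              have hpb : p m (2^(k'+1)) = 2^(k'+1)/(m:ℚ) - (2^(2*(k'+1))+2)/(3*((m:ℚ)*((2^(k'+1) : ℕ):ℚ))) :=
                (ih m (2^(k'+1)) (by omega)).2 (k'+1) (by omega) le_rfl (by omega) (by omega)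
              have hpc : p m (n - 2^(k'+1)) = 2^(k'+1)/(m:ℚ) - (2^(2*(k'+1))+2)/(3*((m:ℚ)*((n - 2^(k'+1) : ℕ):ℚ))) :=
                (ih m (n - 2^(k'+1)) (by omega)).2 (k'+1) (by omega) (by omega) (by omega) (by omega)
              rw [hpb, hpc]
              simp only [hpow2]
              have hle : (2:ℕ)^(k'+1) ≤ n := by omega
              push_cast [Nat.cast_sub hle]
              have hne1 : (n:ℚ) ≠ 0 := ne_of_gt hnQ
              have hne2 : (m:ℚ) ≠ 0 := ne_of_gt hmQ
              have hk'Q : ((2:ℚ)^(k'+1)) < n := by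
                have : (2:ℕ)^(k'+1) < n := by omega
                exact_mod_cast this
              have hne3 : (n:ℚ) - 2^(k'+1) ≠ 0 := by
                intro hcontra; rw [sub_eq_zero] at hcontra; exact absurd hcontra.symm (ne_of_lt hk'Q)
              have hne4 : ((2:ℚ)^(k'+1)) ≠ 0 := by positivity
              field_simp
              ring
      · -- LOWER: m ≤ 2^j < 2m, n ≥ 2^j+1
        intro j hm1 hm2j hj2m hnj
        have hj0 := Nat.two_pow_pos j
        rcases Nat.lt_or_ge m 2 with hm1' | hm2'
        · -- m = 1, j = 0
          have hmeq : m = 1 := by omega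
          have hjeq : j = 0 := by
            by_contra hc
            have : 2^1 ≤ 2^j := Nat.pow_le_pow_right (by norm_num) (by omega)
            omega
          subst hmeq; subst hjeq
          rw [hp2 n (by omega)]
          have hnQ : (0:ℚ) < n := by exact_mod_cast (by omega : 0 < n)
          norm_num
          field_simp
          ring
        · cases j with
          | zero => norm_num at hm2j; omega
          | succ i =>
            have hi0 := Nat.two_pow_pos i
            have e1 : (2:ℕ)^(i+1) = 2*2^i := by ring
            have hmi : 2^i + 1 ≤ m := by omega
            have hn2' : 2 ≤ n := by omega
            have hnQ : (0:ℚ) < n := by exact_mod_cast (by omega : 0 < n)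
            have hmQ : (0:ℚ) < m := by exact_mod_cast (by omega : 0 < m)
            have hmiQ : (2:ℚ)^i + 1 ≤ m := by exact_mod_cast hmi
            have hupper : ∀ x : ℕ, 2^i+1 ≤ x → x + m ≤ N →
                p m x = 1 - 2^i/(x:ℚ) + 2/3*(2^(2*i)+2)/((m:ℚ)*(x:ℚ)) :=
              fun x hx hxm => (ih m x (by omega)).1 i hmi hm2j hx
            have hR : (2:ℚ)^(i+1)/(n:ℚ) - (2^(2*(i+1))+2)/(3*((n:ℚ)*(m:ℚ)))
                = 1 - (3*((n:ℚ))*m - 3*2*2^i*m + 4*(2^i*2^i) + 2)/(3*((n:ℚ)*m)) := by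
              have : (2:ℚ)^(2*(i+1)) = 2^(i+1)*2^(i+1) := hpow2 (i+1)
              rw [this]; field_simp; ring
            have hmixlow : ∀ b c Lc : ℕ, b + c = n → 2^i+1 ≤ b → 1 ≤ c →
                c ≤ 2^Lc → 2^Lc < 2*c → Lc ≤ i →
                1 - (b:ℚ)/n * p m b - (c:ℚ)/n * p m c
                  ≤ 2^(i+1)/(n:ℚ) - (2^(2*(i+1))+2)/(3*((n:ℚ)*(m:ℚ))) := by
              intro b c Lc hbc hbig hc1 hcL hLc hLci
              have hLc2 : 2^Lc ≤ 2^i := Nat.pow_le_pow_right (by norm_num) hLci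
              have hpb := hupper b hbig (by omega)
              have hpc : p m c = 2^Lc/(m:ℚ) - (2^(2*Lc)+2)/(3*((m:ℚ)*(c:ℚ))) :=
                (ih m c (by omega)).2 Lc hc1 hcL hLc (by omega)
              have hbcQ : (b:ℚ) + (c:ℚ) = n := by exact_mod_cast hbc
              have hb0 : (0:ℚ) < b := by exact_mod_cast (by omega : 0 < b)
              have hc0 : (0:ℚ) < c := by exact_mod_cast hc1
              have hcQ : (c:ℚ) ≤ 2^Lc := by exact_mod_cast hcL
              have hLc2Q : (2:ℚ)^Lc ≤ 2^i := by exact_mod_cast hLc2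
              have hc1Q : (1:ℚ) ≤ c := by exact_mod_cast hc1
              have hLc0Q : (0:ℚ) < 2^Lc := by positivity
              have hfb : 1 - (b:ℚ)/n * p m b - (c:ℚ)/n * p m c
                  = 1 - (3*(b:ℚ)*m - 3*2^i*m + 2*(2^i*2^i) + 4 + 3*2^Lc*c - 2^Lc*2^Lc - 2)/(3*((n:ℚ)*m)) := by
                rw [hpb, hpc]; simp only [hpow2]; field_simp; ring
              rw [hfb, hR]
              have hD : (0:ℚ) < 3*((n:ℚ)*m) := by positivity
              refine sub_le_sub_left ((div_le_div_iff_of_pos_right hD).mpr ?_) 1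
              rw [← hbcQ]
              rcases Nat.eq_or_lt_of_le hLci with heq | hlt
              · subst heq
                nlinarith [mul_nonneg (by linarith : (0:ℚ) ≤ (m:ℚ) - 2^Lc)
                  (by linarith : (0:ℚ) ≤ (2:ℚ)^Lc - c)]
              · have h2B : 2*(2:ℚ)^Lc ≤ 2^i := by
                  have h' : (2:ℕ)^(Lc+1) ≤ 2^i := Nat.pow_le_pow_right (by norm_num) hlt
                  have e' : (2:ℕ)^(Lc+1) = 2*2^Lc := by ring
                  exact_mod_cast e' ▸ h'
                nlinarith [mul_nonneg (by linarith : (0:ℚ) ≤ (m:ℚ) - 2^i - 1)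
                    (by linarith : (0:ℚ) ≤ (2:ℚ)^i - c),
                  mul_nonneg (by linarith : (0:ℚ) ≤ (2:ℚ)^Lc - c)
                    (by linarith : (0:ℚ) ≤ (2:ℚ)^i + 1 - 2^Lc),
                  mul_nonneg (by linarith : (0:ℚ) ≤ (2:ℚ)^i - 2^Lc)
                    (by linarith : (0:ℚ) ≤ (2:ℚ)^i - 2*2^Lc),
                  (by linarith : (0:ℚ) ≤ (2:ℚ)^i - 2^Lc)]
            have hbothup : ∀ b c : ℕ, b + c = n → 2^i+1 ≤ b → 2^i+1 ≤ c →
                1 - (b:ℚ)/n * p m b - (c:ℚ)/n * p m c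
                  ≤ 2^(i+1)/(n:ℚ) - (2^(2*(i+1))+2)/(3*((n:ℚ)*(m:ℚ))) := by
              intro b c hbc hbig hcbig
              have hpb := hupper b hbig (by omega)
              have hpc := hupper c hcbig (by omega)
              have hbcQ : (b:ℚ) + (c:ℚ) = n := by exact_mod_cast hbc
              have hb0 : (0:ℚ) < b := by exact_mod_cast (by omega : 0 < b)
              have hc0 : (0:ℚ) < c := by exact_mod_cast (by omega : 0 < c)
              have hfb : 1 - (b:ℚ)/n * p m b - (c:ℚ)/n * p m c
                  = 1 - (3*(b:ℚ)*m - 3*2^i*m + 2*(2^i*2^i) + 4 + 3*(c:ℚ)*m - 3*2^i*m + 2*(2^i*2^i) + 4)/(3*((n:ℚ)*m)) := by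
                rw [hpb, hpc]; simp only [hpow2]; field_simp; ring
              rw [hfb, hR]
              have hD : (0:ℚ) < 3*((n:ℚ)*m) := by positivity
              refine sub_le_sub_left ((div_le_div_iff_of_pos_right hD).mpr ?_) 1
              rw [← hbcQ]
              linarith
            rw [hrec n m hn2' (by omega)]
            apply le_antisymm
            · apply Finset.sup'_le
              intro b hb
              rw [Finset.mem_Icc] at hb
              have hc1 : 1 ≤ n - b := by omega
              rcases le_or_gt b (2^i) with hbs | hbb
              · obtain ⟨Lb, hbL, hLb⟩ := gw_exists_L b hb.1
                have hLbi : Lb ≤ i := gw_exp_le (gw_pow_le (by omega))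
                have := hmixlow (n-b) b Lb (by omega) (by omega) hb.1 hbL hLb hLbi
                linarith
              · rcases le_or_gt (n-b) (2^i) with hcs | hcb
                · obtain ⟨Lc, hcL, hLc⟩ := gw_exists_L (n-b) hc1
                  have hLci : Lc ≤ i := gw_exp_le (gw_pow_le (by omega))
                  exact hmixlow b (n-b) Lc (by omega) (by omega) hc1 hcL hLc hLci
                · exact hbothup b (n-b) (by omega) (by omega) (by omega)
            · have hmem : 2^i ∈ Finset.Icc 1 (n-1) := by rw [Finset.mem_Icc]; omega
              refine le_trans (le_of_eq ?_) (Finset.le_sup' _ hmem)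
              have hpb : p m (2^i) = 2^i/(m:ℚ) - (2^(2*i)+2)/(3*((m:ℚ)*((2^i : ℕ):ℚ))) :=
                (ih m (2^i) (by omega)).2 i (by omega) le_rfl (by omega) (by omega)
              have hpc := hupper (n - 2^i) (by omega) (by omega)
              rw [hpb, hpc]
              simp only [hpow2]
              have hle : (2:ℕ)^i ≤ n := by omega
              push_cast [Nat.cast_sub hle]
              have hne1 : (n:ℚ) ≠ 0 := ne_of_gt hnQ
              have hne2 : (m:ℚ) ≠ 0 := ne_of_gt hmQ
              have hiQ : ((2:ℚ)^i) < n := by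
                have : (2:ℕ)^i < n := by omega
                exact_mod_cast this
              have hne3 : (n:ℚ) - 2^i ≠ 0 := by
                intro hcontra; rw [sub_eq_zero] at hcontra; exact absurd hcontra.symm (ne_of_lt hiQ)
              have hne4 : ((2:ℚ)^i) ≠ 0 := by positivity
              field_simp
              ring
  exact (hmain (n+m) n m le_rfl).1 k hn1 hn2 hm
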